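/- Suppose H = H_1 ⊕ H_2 ⊕ ⋯ ⊕ H_l is an internal orthogonal direct sum of nonzero subspaces and there is a map κ: {1,…,d} → {1,…,l} such that a_i ∈ H_{κ(i)} and a'_i ∈ H_{κ(i)} for every i. Then for each k, the vectors {a_i : κ(i)=k} and {a'_i : κ(i)=k} form orthonormal bases of H_k, and ε(𝒜,𝒜') = max_{1≤k≤l} ε(𝒜|_{H_k}, 𝒜'|_{H_k}), where ε(𝒜|_{H_k}, 𝒜'|_{H_k}) is the state-independent error of the projective measurements on H_k given by these restricted bases (with the same pairing of indices). -/

import Mathlib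

open scoped ComplexInnerProductSpace

noncomputable section

variable {H : Type*} [NormedAddCommGroup H] [InnerProductSpace ℂ H] [FiniteDimensional ℂ H]
variable {ι ι' : Type*} [Fintype ι] [Fintype ι']

/-- The rank-one projector `|v⟩⟨v|`. -/
def ketbra (v : H) : H →ₗ[ℂ] H where
  toFun x := ⟪v, x⟫ • v
  map_add' x y := by simp [inner_add_right, add_smul]
  map_smul' c x := by simp [inner_smul_right, mul_smul]

/-- A density operator: self-adjoint, positive semidefinite, trace one. -/
def IsDensity (ρ : H →ₗ[ℂ] H) : Prop :=
  LinearMap.IsSymmetric ρ ∧ (∀ x : H, 0 ≤ (⟪x, ρ x⟫).re) ∧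
    LinearMap.trace ℂ H ρ = 1

/-- The state-dependent error `ε_ρ(𝒜,𝒜')`. -/
def sdError (a a' : ι → H) (ρ : H →ₗ[ℂ] H) : ℝ :=
  ⨆ i : ι, ‖LinearMap.trace ℂ H (ρ ∘ₗ (ketbra (a i) - ketbra (a' i)))‖

/-- The state-independent error `ε(𝒜,𝒜')`. -/
def siError (a a' : ι → H) : ℝ :=
  ⨆ ρ : {ρ : H →ₗ[ℂ] H // IsDensity ρ}, sdError a a' ρ.1

/-- The operator `|b_i⟩⟨b_i| − Σ_j |⟨a'_j, b_i⟩|² |a'_j⟩⟨a'_j|`. -/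
def distOp (a' : ι' → H) (b : ι → H) (i : ι) : H →ₗ[ℂ] H :=
  ketbra (b i) - ∑ j : ι', (‖⟪a' j, b i⟫‖ ^ 2 : ℂ) • ketbra (a' j)

/-- The state-dependent disturbance `η_ρ(𝒜',ℬ)`. -/
def sdDist (a' : ι' → H) (b : ι → H) (ρ : H →ₗ[ℂ] H) : ℝ :=
  ⨆ i : ι, ‖LinearMap.trace ℂ H (ρ ∘ₗ distOp a' b i)‖

/-- The state-independent disturbance `η(𝒜',ℬ)`. -/
def siDist (a' : ι' → H) (b : ι → H) : ℝ :=
  ⨆ ρ : {ρ : H →ₗ[ℂ] H // IsDensity ρ}, sdDist a' b ρ.1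

/-- The state-independent overall error `Δ(𝒜,𝒜',ℬ)`. -/
def siOverall (a a' b : ι → H) : ℝ :=
  ⨆ ρ : {ρ : H →ₗ[ℂ] H // IsDensity ρ}, (sdError a a' ρ.1 + sdDist a' b ρ.1)

set_option linter.unusedSectionVars false

section Aux
variable {H : Type*} [NormedAddCommGroup H] [InnerProductSpace ℂ H] [FiniteDimensional ℂ H]

lemma ketbra_apply (v x : H) : ketbra v x = ⟪v, x⟫ • v := rfl

lemma trace_eq_sum_inner' {ι : Type*} [Fintype ι] (b : OrthonormalBasis ι ℂ H)
    (T : H →ₗ[ℂ] H) : LinearMap.trace ℂ H T = ∑ i, ⟪b i, T (b i)⟫ := by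
  classical
  rw [LinearMap.trace_eq_matrix_trace ℂ b.toBasis, Matrix.trace]
  simp [Matrix.diag, LinearMap.toMatrix_apply, OrthonormalBasis.coe_toBasis_repr_apply,
    OrthonormalBasis.repr_apply_apply]

lemma trace_comp_ketbra (ρ : H →ₗ[ℂ] H) (v : H) :
    LinearMap.trace ℂ H (ρ ∘ₗ ketbra v) = ⟪v, ρ v⟫ := by
  rw [trace_eq_sum_inner' (stdOrthonormalBasis ℂ H)]
  calc ∑ i, ⟪stdOrthonormalBasis ℂ H i, (ρ ∘ₗ ketbra v) (stdOrthonormalBasis ℂ H i)⟫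
      = ∑ i, ⟪v, stdOrthonormalBasis ℂ H i⟫ * ⟪stdOrthonormalBasis ℂ H i, ρ v⟫ := by
        refine Finset.sum_congr rfl fun i _ => ?_
        simp [ketbra_apply, inner_smul_right, mul_comm]
    _ = ⟪v, ρ v⟫ := (stdOrthonormalBasis ℂ H).sum_inner_mul_inner v (ρ v)

lemma sdError_eq {ι : Type*} [Fintype ι] (a a' : ι → H) (ρ : H →ₗ[ℂ] H) :
    sdError a a' ρ = ⨆ i : ι, ‖⟪a i, ρ (a i)⟫ - ⟪a' i, ρ (a' i)⟫‖ := by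
  unfold sdError
  congr 1; funext i
  rw [LinearMap.comp_sub, map_sub, trace_comp_ketbra, trace_comp_ketbra]

lemma inner_self_real {ρ : H →ₗ[ℂ] H} (hsym : LinearMap.IsSymmetric ρ) (v : H) :
    ⟪v, ρ v⟫ = ((⟪v, ρ v⟫).re : ℂ) := by
  have h : (starRingEnd ℂ) ⟪v, ρ v⟫ = ⟪v, ρ v⟫ := by
    rw [inner_conj_symm]; exact hsym v v
  exact (Complex.conj_eq_iff_re.mp h).symm

lemma inner_density_le_one {ρ : H →ₗ[ℂ] H} (hρ : IsDensity ρ) {v : H} (hv : ‖v‖ = 1) :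
    (⟪v, ρ v⟫).re ≤ 1 := by
  have honv : Orthonormal ℂ ((↑) : ({v} : Set H) → H) := by
    constructor
    · rintro ⟨x, hx⟩; simp at hx; simpa [hx] using hv
    · rintro ⟨x, hx⟩ ⟨y, hy⟩ hxy
      simp at hx hy; exact absurd (by simp [hx, hy]) hxy
  obtain ⟨u, b, hvu, hb⟩ := honv.exists_orthonormalBasis_extension
  have hvu' : v ∈ u := hvu (Set.mem_singleton v)
  have htr := hρ.2.2
  rw [trace_eq_sum_inner' b] at htr
  have h1 : (∑ i : u, ⟪b i, ρ (b i)⟫).re = 1 := by rw [htr]; simp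
  rw [Complex.re_sum] at h1
  calc (⟪v, ρ v⟫).re = (⟪b ⟨v, hvu'⟩, ρ (b ⟨v, hvu'⟩)⟫).re := by rw [hb]
    _ ≤ ∑ i : u, (⟪b i, ρ (b i)⟫).re := by
        apply Finset.single_le_sum (fun i _ => hρ.2.1 _) (Finset.mem_univ _)
    _ = 1 := h1

lemma isDensity_ketbra {u : H} (hu : ‖u‖ = 1) : IsDensity (ketbra u) := by
  refine ⟨?_, ?_, ?_⟩
  · intro x y
    simp only [ketbra_apply, inner_smul_left, inner_smul_right, inner_conj_symm]
    ring
  · intro x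
    have : ⟪x, ketbra u x⟫ = ⟪u, x⟫ * (starRingEnd ℂ) ⟪u, x⟫ := by
      rw [ketbra_apply, inner_smul_right, ← inner_conj_symm x u]
    rw [this, Complex.mul_conj, Complex.ofReal_re]
    exact Complex.normSq_nonneg _
  · have : LinearMap.trace ℂ H (LinearMap.id ∘ₗ ketbra u) = ⟪u, u⟫ := trace_comp_ketbra _ u
    rw [LinearMap.id_comp] at this
    rw [this, inner_self_eq_norm_sq_to_K, hu]
    norm_num

lemma nonempty_density (h : ∃ v : H, v ≠ 0) :
    Nonempty {ρ : H →ₗ[ℂ] H // IsDensity ρ} := by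
  obtain ⟨v, hv⟩ := h
  refine ⟨⟨ketbra (‖v‖⁻¹ • v), isDensity_ketbra ?_⟩⟩
  rw [norm_smul]
  simp [norm_ne_zero_iff.mpr hv, inv_mul_cancel₀]

lemma sdError_nonneg {ι : Type*} [Fintype ι] (a a' : ι → H) (ρ : H →ₗ[ℂ] H) :
    0 ≤ sdError a a' ρ :=
  Real.iSup_nonneg fun _ => norm_nonneg _

lemma sdError_le_one {ι : Type*} [Fintype ι] {a a' : ι → H}
    (hna : ∀ i, ‖a i‖ = 1) (hna' : ∀ i, ‖a' i‖ = 1)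
    {ρ : H →ₗ[ℂ] H} (hρ : IsDensity ρ) : sdError a a' ρ ≤ 1 := by
  rcases isEmpty_or_nonempty ι with hι | hι
  · rw [sdError, Real.iSup_of_isEmpty]; norm_num
  rw [sdError_eq]
  refine ciSup_le fun i => ?_
  rw [inner_self_real hρ.1 (a i), inner_self_real hρ.1 (a' i), ← Complex.ofReal_sub]
  rw [Complex.norm_real, Real.norm_eq_abs]
  have h1 := hρ.2.1 (a i); have h2 := hρ.2.1 (a' i)
  have h3 := inner_density_le_one hρ (hna i)
  have h4 := inner_density_le_one hρ (hna' i)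
  rw [abs_le]; constructor <;> linarith

lemma siError_nonneg {ι : Type*} [Fintype ι] (a a' : ι → H) : 0 ≤ siError a a' :=
  Real.iSup_nonneg fun ρ => sdError_nonneg a a' ρ.1

lemma bddAbove_sdError {ι : Type*} [Fintype ι] {a a' : ι → H}
    (hna : ∀ i, ‖a i‖ = 1) (hna' : ∀ i, ‖a' i‖ = 1) :
    BddAbove (Set.range fun ρ : {ρ : H →ₗ[ℂ] H // IsDensity ρ} => sdError a a' ρ.1) := by
  refine ⟨1, ?_⟩
  rintro x ⟨ρ, rfl⟩
  exact sdError_le_one hna hna' ρ.2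

lemma le_siError {ι : Type*} [Fintype ι] {a a' : ι → H}
    (hna : ∀ i, ‖a i‖ = 1) (hna' : ∀ i, ‖a' i‖ = 1)
    {ρ : H →ₗ[ℂ] H} (hρ : IsDensity ρ) : sdError a a' ρ ≤ siError a a' :=
  le_ciSup (bddAbove_sdError hna hna') (⟨ρ, hρ⟩ : {ρ : H →ₗ[ℂ] H // IsDensity ρ})

lemma inner_map_eq_zero {ρ : H →ₗ[ℂ] H} (hsym : LinearMap.IsSymmetric ρ)
    (hpos : ∀ x : H, 0 ≤ (⟪x, ρ x⟫).re) {y : H} (hy : (⟪y, ρ y⟫).re = 0) (x : H) :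
    ⟪x, ρ y⟫ = 0 := by
  set m := ⟪x, ρ y⟫ with hm
  have hyx : ⟪y, ρ x⟫ = (starRingEnd ℂ) m := by
    rw [hm, inner_conj_symm]
    exact (hsym y x).symm
  have key : ∀ t : ℝ, 0 ≤ (⟪x, ρ x⟫).re - 2 * t * ‖m‖ ^ 2 := by
    intro t
    set θ : ℂ := -(t : ℂ) * (starRingEnd ℂ) m with hθ
    have h0 := hpos (x + θ • y)
    have e1 : ⟪x + θ • y, ρ (x + θ • y)⟫
        = ⟪x, ρ x⟫ + θ * m + (starRingEnd ℂ) (θ * m)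
          + (starRingEnd ℂ) θ * θ * ⟪y, ρ y⟫ := by
      rw [map_add, map_smul]
      simp only [inner_add_left, inner_add_right, inner_smul_left, inner_smul_right, map_mul]
      rw [hyx, ← hm]
      ring
    have hnormsq : Complex.normSq m = ‖m‖ ^ 2 := by
      rw [Complex.normSq_eq_norm_sq]
    have e2 : θ * m = ((-(t * ‖m‖ ^ 2) : ℝ) : ℂ) := by
      rw [hθ, mul_assoc, mul_comm ((starRingEnd ℂ) m) m, Complex.mul_conj, hnormsq]
      push_cast
      ring
    rw [e1, Complex.add_re, Complex.add_re, Complex.add_re, Complex.conj_re, e2] at h0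
    have e3 : ((starRingEnd ℂ) θ * θ * ⟪y, ρ y⟫).re = 0 := by
      rw [mul_comm ((starRingEnd ℂ) θ) θ, Complex.mul_conj, Complex.re_ofReal_mul, hy, mul_zero]
    rw [e3, Complex.ofReal_re] at h0
    linarith
  by_contra hmne
  have hm0 : 0 < ‖m‖ := norm_pos_iff.mpr hmne
  have hmpos : 0 < ‖m‖ ^ 2 := by positivity
  set s : ℝ := ‖m‖ ^ 2 with hs
  have hsne : s ≠ 0 := ne_of_gt hmpos
  have hkey := key (((⟪x, ρ x⟫).re + 1) / (2 * s))
  have h2 : 2 * ((((⟪x, ρ x⟫).re + 1) / (2 * s))) * s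
      = (⟪x, ρ x⟫).re + 1 := by field_simp
  rw [h2] at hkey
  linarith

lemma sum_fiber_eq {M : Type*} [AddCommMonoid M] {d l : ℕ} (κ : Fin d → Fin l) (k : Fin l)
    (g : Fin d → M) (h0 : ∀ j, κ j ≠ k → g j = 0) :
    ∑ j, g j = ∑ i : {i : Fin d // κ i = k}, g i.1 := by
  classical
  rw [← Finset.sum_filter_add_sum_filter_not Finset.univ (fun j => κ j = k) g]
  rw [Finset.sum_eq_zero (fun j hj => h0 j (Finset.mem_filter.mp hj).2), add_zero]
  exact Finset.sum_subtype _ (by simp) g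

lemma sum_fiber_le {d l : ℕ} (κ : Fin d → Fin l) (k : Fin l) (g : Fin d → ℝ)
    (h0 : ∀ j, 0 ≤ g j) :
    ∑ i : {i : Fin d // κ i = k}, g i.1 ≤ ∑ j, g j := by
  classical
  rw [← Finset.sum_subtype (Finset.univ.filter (fun j => κ j = k)) (by simp) g]
  exact Finset.sum_le_sum_of_subset_of_nonneg (Finset.filter_subset _ _) fun j _ _ => h0 j

end Aux

/-- reducibility of the error with respect to an orthogonal direct sum
decomposition compatible with both bases. -/
theorem error_reducibility {d l : ℕ} (hd : 2 ≤ d) (hl : 1 ≤ l)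
    (a a' : OrthonormalBasis (Fin d) ℂ H)
    (V : Fin l → Submodule ℂ H) (hV : ∀ k, V k ≠ ⊥)
    (horth : ∀ k k', k ≠ k' → ∀ x ∈ V k, ∀ y ∈ V k', ⟪x, y⟫ = 0)
    (hsum : iSup V = ⊤)
    (κ : Fin d → Fin l)
    (ha : ∀ i, a i ∈ V (κ i)) (ha' : ∀ i, a' i ∈ V (κ i)) :
    (∀ k : Fin l,
      (∃ B : OrthonormalBasis {i : Fin d // κ i = k} ℂ (V k), ∀ i, (B i : H) = a i.1) ∧
      (∃ B' : OrthonormalBasis {i : Fin d // κ i = k} ℂ (V k), ∀ i, (B' i : H) = a' i.1)) ∧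
    siError (⇑a) (⇑a') = ⨆ k : Fin l,
      siError (fun i : {i : Fin d // κ i = k} => (⟨a i.1, by have h := ha i.1; rwa [i.2] at h⟩ : V k))
              (fun i : {i : Fin d // κ i = k} => (⟨a' i.1, by have h := ha' i.1; rwa [i.2] at h⟩ : V k)) := by
  classical
  haveI hnd : Nonempty (Fin d) := ⟨⟨0, by omega⟩⟩
  haveI hnl : Nonempty (Fin l) := ⟨⟨0, hl⟩⟩
  -- expansion of elements of V k in the fiber of the basis
  have hexp : ∀ (c : OrthonormalBasis (Fin d) ℂ H), (∀ i, c i ∈ V (κ i)) →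
      ∀ (k : Fin l) (x : H), x ∈ V k →
        ∑ i : {i : Fin d // κ i = k}, ⟪c i.1, x⟫ • c i.1 = x := by
    intro c hc k x hx
    rw [← sum_fiber_eq κ k (fun j => ⟪c j, x⟫ • c j) (fun j hj => by
      show ⟪c j, x⟫ • c j = 0
      rw [horth (κ j) k hj (c j) (hc j) x hx, zero_smul])]
    exact c.sum_repr' x
  -- construction of the restricted orthonormal bases
  have honb : ∀ (c : OrthonormalBasis (Fin d) ℂ H), (∀ i, c i ∈ V (κ i)) → ∀ (k : Fin l),
      ∃ B : OrthonormalBasis {i : Fin d // κ i = k} ℂ (V k), ∀ i, (B i : H) = c i.1 := by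
    intro c hc k
    have hmem : ∀ i : {i : Fin d // κ i = k}, c i.1 ∈ V k := fun i => by
      have := hc i.1; rwa [i.2] at this
    set f : {i : Fin d // κ i = k} → V k := fun i => ⟨c i.1, hmem i⟩ with hf
    have hon : Orthonormal ℂ f := by
      constructor
      · intro i
        have : ‖f i‖ = ‖c i.1‖ := rfl
        rw [this]
        exact c.orthonormal.1 i.1
      · intro i j hij
        have hne : (i : Fin d) ≠ (j : Fin d) := fun h => hij (Subtype.ext h)
        have h2 := c.orthonormal.2 hne
        rw [Submodule.coe_inner]
        exact h2
    have hsp : ⊤ ≤ Submodule.span ℂ (Set.range f) := by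
      intro x _
      have h1 := hexp c hc k x.1 x.2
      have h2 : x = ∑ i : {i : Fin d // κ i = k}, ⟪c i.1, (x : H)⟫ • f i := by
        apply Subtype.ext
        have hcoe : ((∑ i : {i : Fin d // κ i = k}, ⟪c i.1, (x : H)⟫ • f i : V k) : H)
            = ∑ i : {i : Fin d // κ i = k}, ⟪c i.1, (x : H)⟫ • c i.1 := by
          rw [show ((∑ i : {i : Fin d // κ i = k}, ⟪c i.1, (x : H)⟫ • f i : V k) : H)
              = (V k).subtype (∑ i : {i : Fin d // κ i = k}, ⟪c i.1, (x : H)⟫ • f i) from rfl,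
            map_sum]
          simp [hf]
        rw [hcoe]
        exact h1.symm
      rw [h2]
      exact Submodule.sum_mem _ fun i _ =>
        Submodule.smul_mem _ _ (Submodule.subset_span ⟨i, rfl⟩)
    exact ⟨OrthonormalBasis.mk hon hsp, fun i => by rw [OrthonormalBasis.coe_mk]⟩
  obtain ⟨Ba, hBa⟩ := Classical.axiomOfChoice (honb a ha)
  obtain ⟨Ba', hBa'⟩ := Classical.axiomOfChoice (honb a' ha')
  have hmema : ∀ (k : Fin l) (i : {i : Fin d // κ i = k}), a i.1 ∈ V k := fun k i => by
    have := ha i.1; rwa [i.2] at this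
  have hmema' : ∀ (k : Fin l) (i : {i : Fin d // κ i = k}), a' i.1 ∈ V k := fun k i => by
    have := ha' i.1; rwa [i.2] at this
  set ua : ∀ k : Fin l, {i : Fin d // κ i = k} → V k := fun k i => ⟨a i.1, hmema k i⟩ with hua
  set ua' : ∀ k : Fin l, {i : Fin d // κ i = k} → V k := fun k i => ⟨a' i.1, hmema' k i⟩ with hua'
  refine ⟨fun k => ⟨⟨Ba k, hBa k⟩, ⟨Ba' k, hBa' k⟩⟩, ?_⟩
  show siError (⇑a) (⇑a') = ⨆ k : Fin l, siError (ua k) (ua' k)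
  -- basic facts
  have hna : ∀ i, ‖a i‖ = 1 := a.orthonormal.1
  have hna' : ∀ i, ‖a' i‖ = 1 := a'.orthonormal.1
  have hnua : ∀ (k : Fin l) (i : {i : Fin d // κ i = k}), ‖ua k i‖ = 1 := fun k i => hna i.1
  have hnua' : ∀ (k : Fin l) (i : {i : Fin d // κ i = k}), ‖ua' k i‖ = 1 := fun k i => hna' i.1
  have hfib : ∀ k : Fin l, Nonempty {i : Fin d // κ i = k} := by
    intro k
    by_contra hne
    rw [not_nonempty_iff] at hne
    refine hV k ((Submodule.eq_bot_iff _).mpr fun x hx => ?_)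
    have h1 := hexp a ha k x hx
    simpa using h1.symm
  have hBaua : ∀ (k : Fin l) (i : {i : Fin d // κ i = k}), Ba k i = ua k i := fun k i =>
    Subtype.ext (hBa k i)
  haveI hDH : Nonempty {ρ : H →ₗ[ℂ] H // IsDensity ρ} := by
    apply nonempty_density
    obtain ⟨x, hx, hx0⟩ := Submodule.ne_bot_iff _ |>.mp (hV ⟨0, hl⟩)
    exact ⟨x, hx0⟩
  haveI hDV : ∀ k : Fin l, Nonempty {σ : V k →ₗ[ℂ] V k // IsDensity σ} := by
    intro k
    apply nonempty_density
    obtain ⟨x, hx, hx0⟩ := Submodule.ne_bot_iff _ |>.mp (hV k)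
    exact ⟨⟨x, hx⟩, fun h => hx0 (congrArg Subtype.val h)⟩
  apply le_antisymm
  · refine ciSup_le fun ρp => ?_
    obtain ⟨ρ, hρ⟩ := ρp
    rw [sdError_eq]
    refine ciSup_le fun i => ?_
    set k := κ i with hk
    have hik : κ i = k := hk.symm
    set t := ∑ j : {j : Fin d // κ j = k}, (⟪a j.1, ρ (a j.1)⟫).re with ht
    have htnn : 0 ≤ t := Finset.sum_nonneg fun j _ => hρ.2.1 _
    have htr1 : ∑ j : Fin d, (⟪a j, ρ (a j)⟫).re = 1 := by
      have h1 := hρ.2.2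
      rw [trace_eq_sum_inner' a] at h1
      have h2 := congrArg Complex.re h1
      rw [Complex.re_sum] at h2
      simpa using h2
    have ht1 : t ≤ 1 := by
      rw [ht]
      calc ∑ j : {j : Fin d // κ j = k}, (⟪a j.1, ρ (a j.1)⟫).re
          ≤ ∑ j : Fin d, (⟪a j, ρ (a j)⟫).re := sum_fiber_le κ k _ fun j => hρ.2.1 _
        _ = 1 := htr1
    have hmain : ‖⟪a i, ρ (a i)⟫ - ⟪a' i, ρ (a' i)⟫‖ ≤ siError (ua k) (ua' k) := by
      rcases eq_or_lt_of_le htnn with ht0 | htpos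
      · -- degenerate case: ρ has no weight on `V k`
        have hz : ∀ j : {j : Fin d // κ j = k}, (⟪a j.1, ρ (a j.1)⟫).re = 0 := fun j =>
          (Finset.sum_eq_zero_iff_of_nonneg (fun j _ => hρ.2.1 _)).mp ht0.symm j
            (Finset.mem_univ j)
        have h1 : ⟪a i, ρ (a i)⟫ = 0 :=
          inner_map_eq_zero hρ.1 hρ.2.1 (hz ⟨i, hik⟩) (a i)
        have h2 : ⟪a' i, ρ (a' i)⟫ = 0 := by
          have hexp' := hexp a ha k (a' i) (hik ▸ ha' i)
          calc ⟪a' i, ρ (a' i)⟫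
              = ⟪a' i, ρ (∑ j : {j : Fin d // κ j = k}, ⟪a j.1, a' i⟫ • a j.1)⟫ := by
                rw [hexp']
            _ = ∑ j : {j : Fin d // κ j = k}, ⟪a j.1, a' i⟫ * ⟪a' i, ρ (a j.1)⟫ := by
                rw [map_sum, inner_sum]
                exact Finset.sum_congr rfl fun j _ => by rw [map_smul, inner_smul_right]
            _ = 0 := Finset.sum_eq_zero fun j _ => by
                rw [inner_map_eq_zero hρ.1 hρ.2.1 (hz j) (a' i), mul_zero]
        rw [h1, h2, sub_zero, norm_zero]
        exact siError_nonneg _ _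
      · -- nondegenerate case: compress and renormalize
        set c : ℂ := ((t⁻¹ : ℝ) : ℂ) with hc
        set σ : V k →ₗ[ℂ] V k :=
          c • (((Submodule.orthogonalProjection (V k) : H →L[ℂ] V k) : H →ₗ[ℂ] V k) ∘ₗ ρ ∘ₗ (V k).subtype)
          with hσdef
        have hσap : ∀ x y : V k, ⟪x, σ y⟫ = c * ⟪(x : H), ρ (y : H)⟫ := by
          intro x y
          have h1 : σ y = c • (Submodule.orthogonalProjection (V k) (ρ (y : H))) := rfl
          rw [h1, inner_smul_right, Submodule.inner_orthogonalProjection_eq_of_mem_left (K := V k) x (ρ (y : H))]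
        have hcre : ∀ z : ℂ, (c * z).re = t⁻¹ * z.re := fun z => by
          rw [hc, Complex.re_ofReal_mul]
        have hσsym : LinearMap.IsSymmetric σ := by
          intro x y
          calc ⟪σ x, y⟫ = (starRingEnd ℂ) ⟪y, σ x⟫ := (inner_conj_symm _ _).symm
            _ = (starRingEnd ℂ) (c * ⟪(y : H), ρ (x : H)⟫) := by rw [hσap]
            _ = c * ⟪ρ (x : H), (y : H)⟫ := by
                rw [map_mul, hc, Complex.conj_ofReal, inner_conj_symm]
            _ = c * ⟪(x : H), ρ (y : H)⟫ := by rw [hρ.1]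
            _ = ⟪x, σ y⟫ := (hσap x y).symm
        have hσpos : ∀ x : V k, 0 ≤ (⟪x, σ x⟫).re := fun x => by
          rw [hσap, hcre]
          exact mul_nonneg (inv_nonneg.mpr htnn) (hρ.2.1 _)
        have hσtr : LinearMap.trace ℂ (V k) σ = 1 := by
          rw [trace_eq_sum_inner' (Ba k)]
          have hterm : ∀ j : {j : Fin d // κ j = k},
              ⟪Ba k j, σ (Ba k j)⟫ = c * ⟪a j.1, ρ (a j.1)⟫ := fun j => by
            rw [hBaua, hσap]
          rw [Finset.sum_congr rfl fun j _ => hterm j, ← Finset.mul_sum]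
          have hsum2 : ∑ j : {j : Fin d // κ j = k}, ⟪a j.1, ρ (a j.1)⟫ = ((t : ℝ) : ℂ) := by
            calc ∑ j : {j : Fin d // κ j = k}, ⟪a j.1, ρ (a j.1)⟫
                = ∑ j : {j : Fin d // κ j = k}, (((⟪a j.1, ρ (a j.1)⟫).re : ℝ) : ℂ) :=
                  Finset.sum_congr rfl fun j _ => inner_self_real hρ.1 _
              _ = ((t : ℝ) : ℂ) := by rw [ht]; push_cast; rfl
          rw [hsum2, hc, ← Complex.ofReal_mul, inv_mul_cancel₀ (ne_of_gt htpos)]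
          norm_num
        have hσden : IsDensity σ := ⟨hσsym, hσpos, hσtr⟩
        have hval : ⟪ua k ⟨i, hik⟩, σ (ua k ⟨i, hik⟩)⟫ = c * ⟪a i, ρ (a i)⟫ := hσap _ _
        have hval' : ⟪ua' k ⟨i, hik⟩, σ (ua' k ⟨i, hik⟩)⟫ = c * ⟪a' i, ρ (a' i)⟫ := hσap _ _
        have heq : ‖⟪a i, ρ (a i)⟫ - ⟪a' i, ρ (a' i)⟫‖
            = t * ‖⟪ua k ⟨i, hik⟩, σ (ua k ⟨i, hik⟩)⟫
                - ⟪ua' k ⟨i, hik⟩, σ (ua' k ⟨i, hik⟩)⟫‖ := by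
          rw [hval, hval', ← mul_sub, norm_mul, hc, Complex.norm_real, Real.norm_eq_abs,
            abs_of_nonneg (inv_nonneg.mpr htnn), ← mul_assoc,
            mul_inv_cancel₀ (ne_of_gt htpos), one_mul]
        rw [heq]
        calc t * ‖⟪ua k ⟨i, hik⟩, σ (ua k ⟨i, hik⟩)⟫
                - ⟪ua' k ⟨i, hik⟩, σ (ua' k ⟨i, hik⟩)⟫‖
            ≤ t * sdError (ua k) (ua' k) σ := by
              refine mul_le_mul_of_nonneg_left ?_ htnn
              rw [sdError_eq]
              exact le_ciSup ((Set.finite_range fun j : {j : Fin d // κ j = k} =>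
                ‖⟪ua k j, σ (ua k j)⟫ - ⟪ua' k j, σ (ua' k j)⟫‖).bddAbove) ⟨i, hik⟩
          _ ≤ t * siError (ua k) (ua' k) :=
              mul_le_mul_of_nonneg_left (le_siError (hnua k) (hnua' k) hσden) htnn
          _ ≤ 1 * siError (ua k) (ua' k) :=
              mul_le_mul_of_nonneg_right ht1 (siError_nonneg _ _)
          _ = siError (ua k) (ua' k) := one_mul _
    exact hmain.trans (le_ciSup ((Set.finite_range fun k : Fin l =>
      siError (ua k) (ua' k)).bddAbove) k)
  · refine ciSup_le fun k => ?_
    refine ciSup_le fun σp => ?_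
    obtain ⟨σ, hσ⟩ := σp
    set ρ : H →ₗ[ℂ] H :=
      (V k).subtype ∘ₗ σ ∘ₗ ((Submodule.orthogonalProjection (V k) : H →L[ℂ] V k) : H →ₗ[ℂ] V k)
      with hρdef
    have hρap : ∀ x : H, ρ x = ((σ (Submodule.orthogonalProjection (V k) x)) : H) := fun x => rfl
    have hinner : ∀ x y : H, ⟪x, ρ y⟫
        = ⟪Submodule.orthogonalProjection (V k) x, σ (Submodule.orthogonalProjection (V k) y)⟫ := by
      intro x y
      rw [hρap]
      exact (Submodule.inner_orthogonalProjection_eq_of_mem_right (K := V k) (σ (Submodule.orthogonalProjection (V k) y)) x).symm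
    have hproj : ∀ i : {i : Fin d // κ i = k}, Submodule.orthogonalProjection (V k) (a i.1) = ua k i := by
      intro i
      have := Submodule.orthogonalProjection_mem_subspace_eq_self (K := V k) (ua k i)
      simpa [hua] using this
    have hproj' : ∀ i : {i : Fin d // κ i = k}, Submodule.orthogonalProjection (V k) (a' i.1) = ua' k i := by
      intro i
      have := Submodule.orthogonalProjection_mem_subspace_eq_self (K := V k) (ua' k i)
      simpa [hua'] using this
    have hterm : ∀ i : {i : Fin d // κ i = k}, ⟪a i.1, ρ (a i.1)⟫ = ⟪ua k i, σ (ua k i)⟫ :=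
      fun i => by rw [hinner, hproj]
    have hterm' : ∀ i : {i : Fin d // κ i = k}, ⟪a' i.1, ρ (a' i.1)⟫ = ⟪ua' k i, σ (ua' k i)⟫ :=
      fun i => by rw [hinner, hproj']
    have hρden : IsDensity ρ := by
      refine ⟨?_, ?_, ?_⟩
      · intro x y
        calc ⟪ρ x, y⟫ = ⟪(σ (Submodule.orthogonalProjection (V k) x) : H), y⟫ := by rw [hρap]
          _ = ⟪σ (Submodule.orthogonalProjection (V k) x), Submodule.orthogonalProjection (V k) y⟫ :=
              (Submodule.inner_orthogonalProjection_eq_of_mem_left (K := V k) _ y).symm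
          _ = ⟪Submodule.orthogonalProjection (V k) x, σ (Submodule.orthogonalProjection (V k) y)⟫ := hσ.1 _ _
          _ = ⟪x, ρ y⟫ := (hinner x y).symm
      · intro x
        rw [hinner]; exact hσ.2.1 _
      · rw [trace_eq_sum_inner' a]
        have h0 : ∀ j : Fin d, κ j ≠ k → ⟪a j, ρ (a j)⟫ = 0 := by
          intro j hj
          rw [hinner]
          have hz : Submodule.orthogonalProjection (V k) (a j) = 0 :=
            Submodule.orthogonalProjection_mem_subspace_orthogonalComplement_eq_zero
              ((Submodule.mem_orthogonal _ _).mpr fun u hu =>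
                horth k (κ j) (Ne.symm hj) u hu _ (ha j))
          rw [hz]; simp
        rw [sum_fiber_eq _ k _ h0]
        rw [Finset.sum_congr rfl fun i _ => hterm i]
        have htr : ∑ i : {i : Fin d // κ i = k}, ⟪ua k i, σ (ua k i)⟫
            = LinearMap.trace ℂ (V k) σ := by
          rw [trace_eq_sum_inner' (Ba k)]
          exact Finset.sum_congr rfl fun i _ => by rw [hBaua]
        rw [htr, hσ.2.2]
    have hle : sdError (ua k) (ua' k) σ ≤ sdError (⇑a) (⇑a') ρ := by
      rw [sdError_eq, sdError_eq]
      haveI := hfib k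
      refine ciSup_le fun i => ?_
      calc ‖⟪ua k i, σ (ua k i)⟫ - ⟪ua' k i, σ (ua' k i)⟫‖
          = ‖⟪a i.1, ρ (a i.1)⟫ - ⟪a' i.1, ρ (a' i.1)⟫‖ := by rw [hterm, hterm']
        _ ≤ ⨆ j : Fin d, ‖⟪a j, ρ (a j)⟫ - ⟪a' j, ρ (a' j)⟫‖ :=
            le_ciSup ((Set.finite_range fun j : Fin d =>
              ‖⟪a j, ρ (a j)⟫ - ⟪a' j, ρ (a' j)⟫‖).bddAbove) i.1
    exact hle.trans (le_siError hna hna' hρden)
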